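/- arXiv:1709.06301 — 3 statements merged into one kernel-verified Lean document; each statement's English description precedes it below -/
import Mathlib

section
/- Let G₁ and G₂ be simple connected graphs with n₁ = |V(G₁)|, n₂ = |V(G₂)| vertices and m₁ = |E(G₁)|, m₂ = |E(G₂)| edges. Then the F-index of the vertex R-join satisfies F(G₁ ∨̇_R G₂) = 8F(G₁) + F(G₂) + 12n₂M₁(G₁) + 3n₁M₁(G₂) + 12m₁n₂² + 6m₂n₁² + n₁n₂(n₁² + n₂²) + 8m₁. -/
/-- The subdivision graph `S(G)`: a new vertex is inserted into each edge of `G`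
(each edge is replaced by a path of length 2). The inserted vertices form the
right summand `↥G.edgeSet`. -/
def Sgraph {V : Type*} (G : SimpleGraph V) : SimpleGraph (V ⊕ ↥G.edgeSet) where
  Adj x y :=
    match x, y with
    | Sum.inl v, Sum.inr e => v ∈ (e : Sym2 V)
    | Sum.inr e, Sum.inl v => v ∈ (e : Sym2 V)
    | _, _ => False
  symm := by constructor; rintro (v | e) (w | f) h <;> exact h
  loopless := by constructor; rintro (v | e) h <;> exact h

/-- The graph `R(G)`: obtained from `G` by inserting a new vertex into each edge of `G`
and joining each new vertex to the end vertices of its corresponding edge. -/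
def Rgraph {V : Type*} (G : SimpleGraph V) : SimpleGraph (V ⊕ ↥G.edgeSet) where
  Adj x y :=
    match x, y with
    | Sum.inl v, Sum.inl w => G.Adj v w
    | Sum.inl v, Sum.inr e => v ∈ (e : Sym2 V)
    | Sum.inr e, Sum.inl v => v ∈ (e : Sym2 V)
    | Sum.inr _, Sum.inr _ => False
  symm := by
    constructor
    rintro (v | e) (w | f) h
    · exact G.adj_symm h
    · exact h
    · exact h
    · exact h
  loopless := by
    constructor
    rintro (v | e) h
    · exact G.irrefl h
    · exact h

/-- The graph `Q(G)`: obtained from `G` by inserting a new vertex into each edge of `G`,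
then joining by edges those pairs of new vertices lying on adjacent edges of `G`. -/
def Qgraph {V : Type*} (G : SimpleGraph V) : SimpleGraph (V ⊕ ↥G.edgeSet) where
  Adj x y :=
    match x, y with
    | Sum.inl _, Sum.inl _ => False
    | Sum.inl v, Sum.inr e => v ∈ (e : Sym2 V)
    | Sum.inr e, Sum.inl v => v ∈ (e : Sym2 V)
    | Sum.inr e, Sum.inr f => e ≠ f ∧ ∃ v, v ∈ (e : Sym2 V) ∧ v ∈ (f : Sym2 V)
  symm := by
    constructor
    rintro (v | e) (w | f) h
    · exact h
    · exact h
    · exact h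
    · exact ⟨h.1.symm, by obtain ⟨v, h1, h2⟩ := h.2; exact ⟨v, h2, h1⟩⟩
  loopless := by
    constructor
    rintro (v | e) h
    · exact h
    · exact h.1 rfl

/-- The total graph `T(G)`: obtained from `G` by inserting a new vertex into each edge,
joining each new vertex to the end vertices of its corresponding edge, and joining by
edges those pairs of new vertices lying on adjacent edges of `G`. -/
def Tgraph {V : Type*} (G : SimpleGraph V) : SimpleGraph (V ⊕ ↥G.edgeSet) where
  Adj x y :=
    match x, y with
    | Sum.inl v, Sum.inl w => G.Adj v w
    | Sum.inl v, Sum.inr e => v ∈ (e : Sym2 V)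
    | Sum.inr e, Sum.inl v => v ∈ (e : Sym2 V)
    | Sum.inr e, Sum.inr f => e ≠ f ∧ ∃ v, v ∈ (e : Sym2 V) ∧ v ∈ (f : Sym2 V)
  symm := by
    constructor
    rintro (v | e) (w | f) h
    · exact G.adj_symm h
    · exact h
    · exact h
    · exact ⟨h.1.symm, by obtain ⟨v, h1, h2⟩ := h.2; exact ⟨v, h2, h1⟩⟩
  loopless := by
    constructor
    rintro (v | e) h
    · exact G.irrefl h
    · exact h.1 rfl

/-- The disjoint union of `H` and `K` together with all edges joining a vertex `a` of `H`
with `P a` to every vertex of `K`. -/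
def joinOn {A B : Type*} (H : SimpleGraph A) (K : SimpleGraph B) (P : A → Prop) :
    SimpleGraph (A ⊕ B) where
  Adj x y :=
    match x, y with
    | Sum.inl a, Sum.inl a' => H.Adj a a'
    | Sum.inr b, Sum.inr b' => K.Adj b b'
    | Sum.inl a, Sum.inr _ => P a
    | Sum.inr _, Sum.inl a => P a
  symm := by
    constructor
    rintro (a | b) (a' | b') h
    · exact H.adj_symm h
    · exact h
    · exact h
    · exact K.adj_symm h
  loopless := by
    constructor
    rintro (a | b) h
    · exact H.irrefl h
    · exact K.irrefl h

/-- The vertex S-join `G₁ ∨̇_S G₂`: obtained from `S(G₁)` and `G₂` by joining each vertex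
of `V(G₁)` to every vertex of `G₂`. -/
def vertexSJoin {V₁ V₂ : Type*} (G₁ : SimpleGraph V₁) (G₂ : SimpleGraph V₂) :
    SimpleGraph ((V₁ ⊕ ↥G₁.edgeSet) ⊕ V₂) :=
  joinOn (Sgraph G₁) G₂ (fun x => x.isLeft)

/-- The edge S-join `G₁ ∨̱_S G₂`: obtained from `S(G₁)` and `G₂` by joining each inserted
vertex (each vertex of `I(G₁)`) to every vertex of `G₂`. -/
def edgeSJoin {V₁ V₂ : Type*} (G₁ : SimpleGraph V₁) (G₂ : SimpleGraph V₂) :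
    SimpleGraph ((V₁ ⊕ ↥G₁.edgeSet) ⊕ V₂) :=
  joinOn (Sgraph G₁) G₂ (fun x => x.isRight)

/-- The vertex R-join `G₁ ∨̇_R G₂`. -/
def vertexRJoin {V₁ V₂ : Type*} (G₁ : SimpleGraph V₁) (G₂ : SimpleGraph V₂) :
    SimpleGraph ((V₁ ⊕ ↥G₁.edgeSet) ⊕ V₂) :=
  joinOn (Rgraph G₁) G₂ (fun x => x.isLeft)

/-- The edge R-join `G₁ ∨̱_R G₂`. -/
def edgeRJoin {V₁ V₂ : Type*} (G₁ : SimpleGraph V₁) (G₂ : SimpleGraph V₂) :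
    SimpleGraph ((V₁ ⊕ ↥G₁.edgeSet) ⊕ V₂) :=
  joinOn (Rgraph G₁) G₂ (fun x => x.isRight)

/-- The vertex Q-join `G₁ ∨̇_Q G₂`. -/
def vertexQJoin {V₁ V₂ : Type*} (G₁ : SimpleGraph V₁) (G₂ : SimpleGraph V₂) :
    SimpleGraph ((V₁ ⊕ ↥G₁.edgeSet) ⊕ V₂) :=
  joinOn (Qgraph G₁) G₂ (fun x => x.isLeft)

/-- The edge Q-join `G₁ ∨̱_Q G₂`. -/
def edgeQJoin {V₁ V₂ : Type*} (G₁ : SimpleGraph V₁) (G₂ : SimpleGraph V₂) :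
    SimpleGraph ((V₁ ⊕ ↥G₁.edgeSet) ⊕ V₂) :=
  joinOn (Qgraph G₁) G₂ (fun x => x.isRight)

/-- The vertex T-join `G₁ ∨̇_T G₂`. -/
def vertexTJoin {V₁ V₂ : Type*} (G₁ : SimpleGraph V₁) (G₂ : SimpleGraph V₂) :
    SimpleGraph ((V₁ ⊕ ↥G₁.edgeSet) ⊕ V₂) :=
  joinOn (Tgraph G₁) G₂ (fun x => x.isLeft)

/-- The edge T-join `G₁ ∨̱_T G₂`. -/
def edgeTJoin {V₁ V₂ : Type*} (G₁ : SimpleGraph V₁) (G₂ : SimpleGraph V₂) :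
    SimpleGraph ((V₁ ⊕ ↥G₁.edgeSet) ⊕ V₂) :=
  joinOn (Tgraph G₁) G₂ (fun x => x.isRight)

/-- Degree of a vertex in a graph on a finite vertex type. -/
noncomputable def gdeg {V : Type*} [Finite V] (G : SimpleGraph V) (v : V) : ℕ :=
  haveI : Fintype ↥(G.neighborSet v) := Fintype.ofFinite _
  G.degree v

/-- The forgotten topological index (F-index): `F(G) = ∑_{v ∈ V(G)} d_G(v)³`. -/
noncomputable def Findex {V : Type*} [Finite V] (G : SimpleGraph V) : ℕ :=
  haveI := Fintype.ofFinite V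
  ∑ v : V, gdeg G v ^ 3

/-- The first Zagreb index: `M₁(G) = ∑_{v ∈ V(G)} d_G(v)²`. -/
noncomputable def M1 {V : Type*} [Finite V] (G : SimpleGraph V) : ℕ :=
  haveI := Fintype.ofFinite V
  ∑ v : V, gdeg G v ^ 2

/-- `M₄(G) = ∑_{v ∈ V(G)} d_G(v)⁴`. -/
noncomputable def M4 {V : Type*} [Finite V] (G : SimpleGraph V) : ℕ :=
  haveI := Fintype.ofFinite V
  ∑ v : V, gdeg G v ^ 4

/-- The hyper Zagreb index: `HM(G) = ∑_{uv ∈ E(G)} (d_G(u) + d_G(v))²`. -/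
noncomputable def HM {V : Type*} [Finite V] (G : SimpleGraph V) : ℕ :=
  haveI : Fintype ↥G.edgeSet := Fintype.ofFinite _
  ∑ e : ↥G.edgeSet,
    Sym2.lift ⟨fun u v => (gdeg G u + gdeg G v) ^ 2,
      fun u v => by dsimp only; rw [add_comm]⟩ (e : Sym2 V)

/-- The redefined Zagreb index:
`ReZM(G) = ∑_{uv ∈ E(G)} d_G(u) d_G(v) (d_G(u) + d_G(v))`. -/
noncomputable def ReZM {V : Type*} [Finite V] (G : SimpleGraph V) : ℕ :=
  haveI : Fintype ↥G.edgeSet := Fintype.ofFinite _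
  ∑ e : ↥G.edgeSet,
    Sym2.lift ⟨fun u v => gdeg G u * gdeg G v * (gdeg G u + gdeg G v),
      fun u v => by dsimp only; ring⟩ (e : Sym2 V)

/-- The number of edges of `G`. -/
noncomputable def numEdges {V : Type*} (G : SimpleGraph V) : ℕ :=
  Nat.card ↥G.edgeSet

section Helpers

variable {V : Type*} [Finite V] (G : SimpleGraph V)

lemma gdeg_eq_ncard (v : V) : gdeg G v = Nat.card (G.neighborSet v) := by
  rw [gdeg, @Nat.card_eq_fintype_card _ (Fintype.ofFinite _)]
  exact (@SimpleGraph.card_neighborSet_eq_degree _ G v (Fintype.ofFinite _)).symm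

lemma gdeg_eq (v : V) [Fintype ↥(G.neighborSet v)] : gdeg G v = G.degree v := by
  rw [gdeg_eq_ncard, Nat.card_eq_fintype_card, SimpleGraph.card_neighborSet_eq_degree]

lemma ncard_incident (v : V) :
    Nat.card {e : ↥G.edgeSet // v ∈ (e : Sym2 V)} = gdeg G v := by
  classical
  rw [gdeg_eq_ncard]
  exact Nat.card_congr ((Equiv.subtypeSubtypeEquivSubtypeInter _ _).trans
    (G.incidenceSetEquivNeighborSet v))

lemma Findex_eq [Fintype V] : Findex G = ∑ v, gdeg G v ^ 3 := by
  rw [Findex]; congr!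

lemma M1_eq [Fintype V] : M1 G = ∑ v, gdeg G v ^ 2 := by
  rw [M1]; congr!

lemma sum_gdeg [Fintype V] : ∑ v, gdeg G v = 2 * numEdges G := by
  classical
  have h : ∀ v, gdeg G v = G.degree v := fun v => gdeg_eq G v
  simp_rw [h]
  rw [SimpleGraph.sum_degrees_eq_twice_card_edges, numEdges,
    Nat.card_eq_fintype_card, SimpleGraph.edgeFinset_card]

end Helpers

section DegLemmas

variable {V₁ V₂ : Type*} [Finite V₁] [Finite V₂] (G₁ : SimpleGraph V₁) (G₂ : SimpleGraph V₂)

lemma deg_vRJ_inl_inl (v : V₁) :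
    gdeg (vertexRJoin G₁ G₂) (Sum.inl (Sum.inl v)) = 2 * gdeg G₁ v + Nat.card V₂ := by
  rw [gdeg_eq_ncard]
  have e1 : ↥((vertexRJoin G₁ G₂).neighborSet (Sum.inl (Sum.inl v))) ≃
      (↥(G₁.neighborSet v) ⊕ {e : ↥G₁.edgeSet // v ∈ (e : Sym2 V₁)}) ⊕ V₂ :=
    Equiv.subtypeSum.trans (Equiv.sumCongr
      (Equiv.subtypeSum.trans (Equiv.sumCongr
        (Equiv.subtypeEquivRight fun w => Iff.rfl)
        (Equiv.subtypeEquivRight fun e => Iff.rfl)))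
      (Equiv.subtypeUnivEquiv fun _ => rfl))
  rw [Nat.card_congr e1, Nat.card_sum, Nat.card_sum, ncard_incident, ← gdeg_eq_ncard]
  ring

lemma deg_vRJ_inl_inr (e : ↥G₁.edgeSet) :
    gdeg (vertexRJoin G₁ G₂) (Sum.inl (Sum.inr e)) = 2 := by
  rw [gdeg_eq_ncard]
  have e1 : ↥((vertexRJoin G₁ G₂).neighborSet (Sum.inl (Sum.inr e))) ≃
      ({w : V₁ // w ∈ (e : Sym2 V₁)} ⊕ {f : ↥G₁.edgeSet // False}) ⊕ {b : V₂ // False} :=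
    Equiv.subtypeSum.trans (Equiv.sumCongr
      (Equiv.subtypeSum.trans (Equiv.sumCongr
        (Equiv.subtypeEquivRight fun w => Iff.rfl)
        (Equiv.subtypeEquivRight fun f => Iff.rfl)))
      (Equiv.subtypeEquivRight fun b => iff_false_intro fun h => Bool.noConfusion h))
  rw [Nat.card_congr e1, Nat.card_sum, Nat.card_sum]
  obtain ⟨s, hs⟩ := e
  induction s using Sym2.ind with
  | _ a b =>
    have hab : a ≠ b := (G₁.mem_edgeSet.mp hs).ne
    have e2 : {w : V₁ // w ∈ (⟨s(a, b), hs⟩ : ↥G₁.edgeSet).val} ≃ ↥({a, b} : Set V₁) :=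
      Equiv.subtypeEquivRight fun w => by simp [Sym2.mem_iff, Set.mem_insert_iff]
    rw [Nat.card_congr e2, Nat.card_coe_set_eq, Set.ncard_pair hab]
    simp

lemma deg_vRJ_inr (w : V₂) :
    gdeg (vertexRJoin G₁ G₂) (Sum.inr w) = gdeg G₂ w + Nat.card V₁ := by
  rw [gdeg_eq_ncard]
  have e1 : ↥((vertexRJoin G₁ G₂).neighborSet (Sum.inr w)) ≃
      (V₁ ⊕ {f : ↥G₁.edgeSet // False}) ⊕ ↥(G₂.neighborSet w) :=
    Equiv.subtypeSum.trans (Equiv.sumCongr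
      (Equiv.subtypeSum.trans (Equiv.sumCongr
        (Equiv.subtypeUnivEquiv fun _ => rfl)
        (Equiv.subtypeEquivRight fun f => iff_false_intro fun h => Bool.noConfusion h)))
      (Equiv.subtypeEquivRight fun b => Iff.rfl))
  rw [Nat.card_congr e1, Nat.card_sum, Nat.card_sum, ← gdeg_eq_ncard]
  simp [add_comm]

end DegLemmas

theorem Findex_vertexRJoin {V₁ V₂ : Type*} [Finite V₁] [Finite V₂]
    (G₁ : SimpleGraph V₁) (G₂ : SimpleGraph V₂)
    (hc₁ : G₁.Connected) (hc₂ : G₂.Connected)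
    (n₁ n₂ m₁ m₂ : ℕ)
    (hn₁ : n₁ = Nat.card V₁) (hn₂ : n₂ = Nat.card V₂)
    (hm₁ : m₁ = numEdges G₁) (hm₂ : m₂ = numEdges G₂) :
    (Findex (vertexRJoin G₁ G₂) : ℤ) =
      8 * (Findex G₁ : ℤ) + (Findex G₂ : ℤ) + 12 * (n₂ : ℤ) * (M1 G₁ : ℤ) + 3 * (n₁ : ℤ) * (M1 G₂ : ℤ)
        + 12 * (m₁ : ℤ) * (n₂ : ℤ) ^ 2 + 6 * (m₂ : ℤ) * (n₁ : ℤ) ^ 2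
        + (n₁ : ℤ) * (n₂ : ℤ) * ((n₁ : ℤ) ^ 2 + (n₂ : ℤ) ^ 2) + 8 * (m₁ : ℤ) := by
  classical
  haveI iV1 := Fintype.ofFinite V₁
  haveI iV2 := Fintype.ofFinite V₂
  haveI iE := Fintype.ofFinite ↥G₁.edgeSet
  have S1 : (∑ v, (gdeg G₁ v : ℤ)) = 2 * m₁ := by
    have := sum_gdeg G₁
    rw [← hm₁] at this
    exact_mod_cast congrArg (Nat.cast : ℕ → ℤ) this
  have S1' : (∑ v, (gdeg G₂ v : ℤ)) = 2 * m₂ := by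
    have := sum_gdeg G₂
    rw [← hm₂] at this
    exact_mod_cast congrArg (Nat.cast : ℕ → ℤ) this
  have S2 : (∑ v, (gdeg G₁ v : ℤ) ^ 2) = (M1 G₁ : ℤ) := by
    rw [M1_eq]; push_cast; rfl
  have S2' : (∑ v, (gdeg G₂ v : ℤ) ^ 2) = (M1 G₂ : ℤ) := by
    rw [M1_eq]; push_cast; rfl
  have S3 : (∑ v, (gdeg G₁ v : ℤ) ^ 3) = (Findex G₁ : ℤ) := by
    rw [Findex_eq]; push_cast; rfl
  have S3' : (∑ v, (gdeg G₂ v : ℤ) ^ 3) = (Findex G₂ : ℤ) := by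
    rw [Findex_eq]; push_cast; rfl
  have C1 : ((Nat.card V₁ : ℕ) : ℤ) = n₁ := by rw [hn₁]
  have C2 : ((Nat.card V₂ : ℕ) : ℤ) = n₂ := by rw [hn₂]
  have CE : ((Fintype.card ↥G₁.edgeSet : ℕ) : ℤ) = m₁ := by
    rw [hm₁, numEdges, Nat.card_eq_fintype_card]
  have CV1 : ((Fintype.card V₁ : ℕ) : ℤ) = n₁ := by
    rw [hn₁, Nat.card_eq_fintype_card]
  have CV2 : ((Fintype.card V₂ : ℕ) : ℤ) = n₂ := by
    rw [hn₂, Nat.card_eq_fintype_card]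
  rw [Findex_eq, Fintype.sum_sum_type, Fintype.sum_sum_type]
  simp only [deg_vRJ_inl_inl, deg_vRJ_inl_inr, deg_vRJ_inr]
  push_cast
  have E1 : ∀ v : V₁, ((2 * (gdeg G₁ v : ℤ) + (Nat.card V₂ : ℤ)) ^ 3)
      = 8 * (gdeg G₁ v : ℤ) ^ 3 + 12 * (Nat.card V₂ : ℤ) * (gdeg G₁ v : ℤ) ^ 2
        + 6 * (Nat.card V₂ : ℤ) ^ 2 * (gdeg G₁ v : ℤ) + (Nat.card V₂ : ℤ) ^ 3 := by
    intro v; ring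
  have E2 : ∀ w : V₂, (((gdeg G₂ w : ℤ) + (Nat.card V₁ : ℤ)) ^ 3)
      = (gdeg G₂ w : ℤ) ^ 3 + 3 * (Nat.card V₁ : ℤ) * (gdeg G₂ w : ℤ) ^ 2
        + 3 * (Nat.card V₁ : ℤ) ^ 2 * (gdeg G₂ w : ℤ) + (Nat.card V₁ : ℤ) ^ 3 := by
    intro w; ring
  simp only [E1, E2, Finset.sum_add_distrib, ← Finset.mul_sum, Finset.sum_const,
    Finset.card_univ, nsmul_eq_mul]
  rw [S1, S1', S2, S2', S3, S3', C1, C2, CE, CV1, CV2]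
  ring
end

section
/- Let G₁ and G₂ be simple connected graphs with n₁ = |V(G₁)|, n₂ = |V(G₂)| vertices and m₁ = |E(G₁)|, m₂ = |E(G₂)| edges. Then the F-index of the vertex T-join satisfies F(G₁ ∨̇_T G₂) = 8F(G₁) + F(G₂) + 12n₂M₁(G₁) + 3n₁M₁(G₂) + M₄(G₁) + 3ReZM(G₁) + 12m₁n₂² + 6m₂n₁² + n₁n₂(n₁² + n₂²). -/
lemma sum_univ_indep {α M : Type*} [AddCommMonoid M] (I J : Fintype α) (f : α → M) :
    @Finset.sum α M _ (@Finset.univ α I) f = @Finset.sum α M _ (@Finset.univ α J) f := by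
  rw [Subsingleton.elim I J]

lemma gdeg_eq_natCard {V : Type*} [Finite V] (G : SimpleGraph V) (v : V) :
    gdeg G v = Nat.card (G.neighborSet v) := by
  unfold gdeg
  letI : Fintype ↥(G.neighborSet v) := Fintype.ofFinite _
  rw [← SimpleGraph.card_neighborSet_eq_degree, Nat.card_eq_fintype_card]

lemma natCard_adj {V : Type*} [Finite V] (G : SimpleGraph V) (v : V) :
    Nat.card {w : V // G.Adj v w} = gdeg G v := (gdeg_eq_natCard G v).symm

lemma natCard_inc {V : Type*} [Finite V] (G : SimpleGraph V) (v : V) :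
    Nat.card {e : G.edgeSet // v ∈ (e : Sym2 V)} = gdeg G v := by
  classical
  have e : {e : G.edgeSet // v ∈ (e : Sym2 V)} ≃ G.incidenceSet v :=
    ⟨fun x => ⟨x.1.1, x.1.2, x.2⟩, fun x => ⟨⟨x.1, x.2.1⟩, x.2.2⟩, fun _ => rfl, fun _ => rfl⟩
  rw [Nat.card_congr e, Nat.card_congr (G.incidenceSetEquivNeighborSet v), ← gdeg_eq_natCard]

lemma ncard_incidenceSet {V : Type*} [Finite V] (G : SimpleGraph V) (v : V) :
    (G.incidenceSet v).ncard = gdeg G v := by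
  classical
  rw [← Nat.card_coe_set_eq, Nat.card_congr (G.incidenceSetEquivNeighborSet v),
    ← gdeg_eq_natCard]

lemma natCard_sum_subtype {A B : Type*} [Finite A] [Finite B] (p : A ⊕ B → Prop) :
    Nat.card {x : A ⊕ B // p x} =
      Nat.card {a : A // p (Sum.inl a)} + Nat.card {b : B // p (Sum.inr b)} := by
  rw [← Nat.card_sum]
  exact Nat.card_congr
    ⟨fun x => match x with
      | ⟨Sum.inl a, h⟩ => Sum.inl ⟨a, h⟩
      | ⟨Sum.inr b, h⟩ => Sum.inr ⟨b, h⟩,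
     fun y => match y with
      | Sum.inl ⟨a, h⟩ => ⟨Sum.inl a, h⟩
      | Sum.inr ⟨b, h⟩ => ⟨Sum.inr b, h⟩,
     by rintro ⟨(a | b), h⟩ <;> rfl,
     by rintro (⟨a, h⟩ | ⟨b, h⟩) <;> rfl⟩

lemma natCard_shares {V : Type*} [Finite V] (G : SimpleGraph V) (u w : V)
    (hadj : G.Adj u w) (hs : s(u, w) ∈ G.edgeSet) :
    Nat.card {f : G.edgeSet // (⟨s(u, w), hs⟩ : G.edgeSet) ≠ f ∧
        ∃ v, v ∈ (s(u, w) : Sym2 V) ∧ v ∈ (f : Sym2 V)} + 2 = gdeg G u + gdeg G w := by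
  classical
  have hne : u ≠ w := hadj.ne
  set T : Set (Sym2 V) := {f | f ∈ G.edgeSet ∧ f ≠ s(u, w) ∧ (u ∈ f ∨ w ∈ f)} with hT
  have hcard : Nat.card {f : G.edgeSet // (⟨s(u, w), hs⟩ : G.edgeSet) ≠ f ∧
      ∃ v, v ∈ (s(u, w) : Sym2 V) ∧ v ∈ (f : Sym2 V)} = T.ncard := by
    rw [← Nat.card_coe_set_eq]
    refine Nat.card_congr ⟨fun x => ⟨x.1.1, x.1.2, ?_, ?_⟩, fun y => ⟨⟨y.1, y.2.1⟩, ?_, ?_⟩,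
      fun _ => rfl, fun _ => rfl⟩
    · intro h; exact x.2.1 (Subtype.ext h.symm)
    · obtain ⟨v, hve, hvf⟩ := x.2.2
      rcases Sym2.mem_iff.mp hve with rfl | rfl
      · exact Or.inl hvf
      · exact Or.inr hvf
    · intro h; exact y.2.2.1 (congrArg Subtype.val h.symm)
    · rcases y.2.2.2 with h | h
      · exact ⟨u, Sym2.mem_mk_left u w, h⟩
      · exact ⟨w, Sym2.mem_mk_right u w, h⟩
  rw [hcard]
  set S : Set (Sym2 V) := G.incidenceSet u ∪ G.incidenceSet w with hS
  have hTS : T = S \ {s(u, w)} := by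
    ext f
    simp only [hT, hS, SimpleGraph.incidenceSet, Set.mem_setOf_eq, Set.mem_diff, Set.mem_union,
      Set.mem_singleton_iff, Set.mem_sep_iff]
    tauto
  have he : s(u, w) ∈ S := Or.inl ⟨hs, Sym2.mem_mk_left u w⟩
  have h1 : T.ncard + 1 = S.ncard := by
    rw [hTS]; exact Set.ncard_diff_singleton_add_one he (Set.toFinite S)
  have hinter : G.incidenceSet u ∩ G.incidenceSet w = {s(u, w)} := by
    ext f
    simp only [Set.mem_inter_iff, SimpleGraph.incidenceSet, Set.mem_sep_iff,
      Set.mem_singleton_iff]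
    constructor
    · rintro ⟨⟨hf, hu⟩, ⟨-, hw⟩⟩
      exact (Sym2.mem_and_mem_iff hne).mp ⟨hu, hw⟩
    · rintro rfl
      exact ⟨⟨hs, Sym2.mem_mk_left u w⟩, ⟨hs, Sym2.mem_mk_right u w⟩⟩
  have h2 : S.ncard + 1 = gdeg G u + gdeg G w := by
    have := Set.ncard_union_add_ncard_inter (G.incidenceSet u) (G.incidenceSet w)
      (Set.toFinite _) (Set.toFinite _)
    rw [hinter, Set.ncard_singleton, ncard_incidenceSet, ncard_incidenceSet] at this
    exact this
  omega

lemma natCard_subtype_const_true {α : Type*} (p : Prop) (h : p) :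
    Nat.card {_a : α // p} = Nat.card α :=
  Nat.card_congr (Equiv.subtypeUnivEquiv fun _ => h)

lemma natCard_subtype_false {α : Type*} (p : α → Prop) (h : ∀ a, ¬ p a) :
    Nat.card {a : α // p a} = 0 :=
  @Nat.card_of_isEmpty _ ⟨fun x => h x.1 x.2⟩

lemma natCard_mem_pair {V : Type*} (u w : V) (hne : u ≠ w) :
    Nat.card {v : V // v ∈ (s(u, w) : Sym2 V)} = 2 := by
  have hset : {v : V | v ∈ (s(u, w) : Sym2 V)} = {u, w} := by
    ext x; simp [Sym2.mem_iff]
  calc Nat.card {v : V // v ∈ (s(u, w) : Sym2 V)} = ({u, w} : Set V).ncard := by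
        rw [← Nat.card_coe_set_eq]; exact Nat.card_congr (Equiv.setCongr hset)
    _ = 2 := Set.ncard_pair hne

section degs
variable {V₁ V₂ : Type*} [Finite V₁] [Finite V₂] (G₁ : SimpleGraph V₁) (G₂ : SimpleGraph V₂)

lemma gdeg_vertexTJoin_inl_inl (v : V₁) :
    gdeg (vertexTJoin G₁ G₂) (Sum.inl (Sum.inl v)) = 2 * gdeg G₁ v + Nat.card V₂ := by
  have h1 : gdeg (vertexTJoin G₁ G₂) (Sum.inl (Sum.inl v)) =
      Nat.card {a : V₁ ⊕ ↥G₁.edgeSet // (Tgraph G₁).Adj (Sum.inl v) a} +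
      Nat.card {_b : V₂ // (Sum.inl v : V₁ ⊕ ↥G₁.edgeSet).isLeft = true} := by
    rw [gdeg_eq_natCard]
    exact natCard_sum_subtype
      (fun y => (vertexTJoin G₁ G₂).Adj (Sum.inl (Sum.inl v)) y)
  have h2 : Nat.card {a : V₁ ⊕ ↥G₁.edgeSet // (Tgraph G₁).Adj (Sum.inl v) a} =
      Nat.card {w : V₁ // G₁.Adj v w} + Nat.card {e : G₁.edgeSet // v ∈ (e : Sym2 V₁)} :=
    natCard_sum_subtype (fun a => (Tgraph G₁).Adj (Sum.inl v) a)
  rw [h1, h2, natCard_adj, natCard_inc,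
    natCard_subtype_const_true (α := V₂) ((Sum.inl v : V₁ ⊕ ↥G₁.edgeSet).isLeft = true) rfl]
  ring

lemma gdeg_vertexTJoin_inr (b : V₂) :
    gdeg (vertexTJoin G₁ G₂) (Sum.inr b) = gdeg G₂ b + Nat.card V₁ := by
  have h1 : gdeg (vertexTJoin G₁ G₂) (Sum.inr b) =
      Nat.card {a : V₁ ⊕ ↥G₁.edgeSet // a.isLeft = true} +
      Nat.card {b' : V₂ // G₂.Adj b b'} := by
    rw [gdeg_eq_natCard]
    exact natCard_sum_subtype (fun y => (vertexTJoin G₁ G₂).Adj (Sum.inr b) y)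
  have h2 : Nat.card {a : V₁ ⊕ ↥G₁.edgeSet // a.isLeft = true} =
      Nat.card {v : V₁ // (Sum.inl v : V₁ ⊕ ↥G₁.edgeSet).isLeft = true} +
      Nat.card {e : G₁.edgeSet // (Sum.inr e : V₁ ⊕ ↥G₁.edgeSet).isLeft = true} :=
    natCard_sum_subtype (fun a : V₁ ⊕ ↥G₁.edgeSet => a.isLeft = true)
  have h3 : Nat.card {v : V₁ // (Sum.inl v : V₁ ⊕ ↥G₁.edgeSet).isLeft = true} = Nat.card V₁ :=
    natCard_subtype_const_true _ rfl
  have h4 : Nat.card {e : G₁.edgeSet // (Sum.inr e : V₁ ⊕ ↥G₁.edgeSet).isLeft = true} = 0 :=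
    natCard_subtype_false _ (fun _ h => by simp at h)
  rw [h1, h2, h3, h4, natCard_adj]
  ring

lemma gdeg_vertexTJoin_inl_inr (e : G₁.edgeSet) :
    gdeg (vertexTJoin G₁ G₂) (Sum.inl (Sum.inr e)) =
      Sym2.lift ⟨fun u w => gdeg G₁ u + gdeg G₁ w, fun u w => by dsimp only; ring⟩
        (e : Sym2 V₁) := by
  obtain ⟨s, hs⟩ := e
  revert hs
  induction s using Sym2.ind with
  | _ u w =>
  intro hs
  have hadj : G₁.Adj u w := hs
  have hne : u ≠ w := hadj.ne
  have h1 : gdeg (vertexTJoin G₁ G₂) (Sum.inl (Sum.inr ⟨s(u, w), hs⟩)) =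
      Nat.card {a : V₁ ⊕ ↥G₁.edgeSet //
          (Tgraph G₁).Adj (Sum.inr (⟨s(u, w), hs⟩ : G₁.edgeSet)) a} +
      Nat.card {_b : V₂ //
          (Sum.inr (⟨s(u, w), hs⟩ : G₁.edgeSet) : V₁ ⊕ ↥G₁.edgeSet).isLeft = true} := by
    rw [gdeg_eq_natCard]
    exact natCard_sum_subtype _
  have h2 : Nat.card {a : V₁ ⊕ ↥G₁.edgeSet //
        (Tgraph G₁).Adj (Sum.inr (⟨s(u, w), hs⟩ : G₁.edgeSet)) a} =
      Nat.card {x : V₁ // x ∈ (s(u, w) : Sym2 V₁)} +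
      Nat.card {f : G₁.edgeSet // (⟨s(u, w), hs⟩ : G₁.edgeSet) ≠ f ∧
          ∃ x, x ∈ (s(u, w) : Sym2 V₁) ∧ x ∈ (f : Sym2 V₁)} :=
    natCard_sum_subtype _
  have h3 := natCard_shares G₁ u w hadj hs
  have h4 : Nat.card {_b : V₂ //
      (Sum.inr (⟨s(u, w), hs⟩ : G₁.edgeSet) : V₁ ⊕ ↥G₁.edgeSet).isLeft = true} = 0 :=
    natCard_subtype_false _ (fun _ h => by simp at h)
  have h5 : Sym2.lift ⟨fun u w => gdeg G₁ u + gdeg G₁ w, fun u w => by dsimp only; ring⟩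
      ((⟨s(u, w), hs⟩ : G₁.edgeSet) : Sym2 V₁) = gdeg G₁ u + gdeg G₁ w := rfl
  rw [h1, h2, h4, h5, natCard_mem_pair u w hne]
  omega

end degs

lemma Findex_eq_s6 {V : Type*} [Finite V] (G : SimpleGraph V) (I : Fintype V) :
    Findex G = @Finset.sum V ℕ _ (@Finset.univ V I) (fun v => gdeg G v ^ 3) := by
  unfold Findex; exact sum_univ_indep _ I _

lemma M1_eq_s6 {V : Type*} [Finite V] (G : SimpleGraph V) (I : Fintype V) :
    M1 G = @Finset.sum V ℕ _ (@Finset.univ V I) (fun v => gdeg G v ^ 2) := by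
  unfold M1; exact sum_univ_indep _ I _

lemma M4_eq {V : Type*} [Finite V] (G : SimpleGraph V) (I : Fintype V) :
    M4 G = @Finset.sum V ℕ _ (@Finset.univ V I) (fun v => gdeg G v ^ 4) := by
  unfold M4; exact sum_univ_indep _ I _

lemma ReZM_eq {V : Type*} [Finite V] (G : SimpleGraph V) (I : Fintype ↥G.edgeSet) :
    ReZM G = @Finset.sum _ ℕ _ (@Finset.univ _ I)
      (fun e : G.edgeSet => Sym2.lift ⟨fun u v => gdeg G u * gdeg G v * (gdeg G u + gdeg G v),
        fun u v => by dsimp only; ring⟩ (e : Sym2 V)) := by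
  unfold ReZM; exact sum_univ_indep _ I _

lemma sum_gdeg_eq {V : Type*} [Finite V] (G : SimpleGraph V) (I : Fintype V) :
    @Finset.sum V ℕ _ (@Finset.univ V I) (fun v => gdeg G v) = 2 * numEdges G := by
  classical
  have hdeg : ∀ v, gdeg G v = G.degree v := fun v => by
    rw [gdeg_eq_natCard, ← SimpleGraph.card_neighborSet_eq_degree]
    exact Nat.card_eq_fintype_card
  calc @Finset.sum V ℕ _ (@Finset.univ V I) (fun v => gdeg G v)
      = ∑ v : V, G.degree v := by
        rw [sum_univ_indep I inferInstance]
        exact Finset.sum_congr rfl (fun v _ => hdeg v)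
    _ = 2 * G.edgeFinset.card := G.sum_degrees_eq_twice_card_edges
    _ = 2 * numEdges G := by
        rw [SimpleGraph.edgeFinset_card, numEdges]
        congr 1
        exact (Nat.card_eq_fintype_card).symm

lemma sum_edge_lift {V : Type*} [Finite V] (G : SimpleGraph V) [Fintype ↥G.edgeSet]
    [Fintype V] (f : V → ℕ) :
    ∑ e : G.edgeSet, Sym2.lift ⟨fun u v => f u + f v, fun u v => by dsimp only; ring⟩
        (e : Sym2 V)
      = ∑ v : V, gdeg G v * f v := by
  classical
  calc ∑ e : G.edgeSet, Sym2.lift ⟨fun u v => f u + f v, fun u v => by dsimp only; ring⟩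
        (e : Sym2 V)
      = ∑ e : G.edgeSet, ∑ v : V, if v ∈ (e : Sym2 V) then f v else 0 := by
        refine Finset.sum_congr rfl fun e he => ?_
        clear he
        obtain ⟨s, hs⟩ := e
        revert hs
        induction s using Sym2.ind with
        | _ u w =>
        intro hs
        have hne : u ≠ w := G.ne_of_adj hs
        have hfil : Finset.univ.filter (fun v => v ∈ (s(u, w) : Sym2 V)) = {u, w} := by
          ext x; simp [Sym2.mem_iff]
        rw [← Finset.sum_filter, hfil, Finset.sum_pair hne]
        rfl
    _ = ∑ v : V, ∑ e : G.edgeSet, if v ∈ (e : Sym2 V) then f v else 0 := Finset.sum_comm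
    _ = ∑ v : V, gdeg G v * f v := by
        refine Finset.sum_congr rfl fun v _ => ?_
        rw [← Finset.sum_filter, Finset.sum_const, smul_eq_mul]
        congr 1
        rw [← natCard_inc G v, Nat.card_eq_fintype_card, Fintype.card_subtype]


theorem Findex_vertexTJoin {V₁ V₂ : Type*} [Finite V₁] [Finite V₂]
    (G₁ : SimpleGraph V₁) (G₂ : SimpleGraph V₂)
    (hc₁ : G₁.Connected) (hc₂ : G₂.Connected)
    (n₁ n₂ m₁ m₂ : ℕ)
    (hn₁ : n₁ = Nat.card V₁) (hn₂ : n₂ = Nat.card V₂)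
    (hm₁ : m₁ = numEdges G₁) (hm₂ : m₂ = numEdges G₂) :
    (Findex (vertexTJoin G₁ G₂) : ℤ) =
      8 * (Findex G₁ : ℤ) + (Findex G₂ : ℤ) + 12 * (n₂ : ℤ) * (M1 G₁ : ℤ) + 3 * (n₁ : ℤ) * (M1 G₂ : ℤ)
        + (M4 G₁ : ℤ) + 3 * (ReZM G₁ : ℤ) + 12 * (m₁ : ℤ) * (n₂ : ℤ) ^ 2 + 6 * (m₂ : ℤ) * (n₁ : ℤ) ^ 2
        + (n₁ : ℤ) * (n₂ : ℤ) * ((n₁ : ℤ) ^ 2 + (n₂ : ℤ) ^ 2) := by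
  classical
  letI J1 : Fintype V₁ := Fintype.ofFinite _
  letI J2 : Fintype V₂ := Fintype.ofFinite _
  letI JE : Fintype ↥G₁.edgeSet := Fintype.ofFinite _
  have key : Findex (vertexTJoin G₁ G₂) =
      (∑ v : V₁, (2 * gdeg G₁ v + n₂) ^ 3) +
      (∑ e : G₁.edgeSet, (Sym2.lift ⟨fun u w => gdeg G₁ u + gdeg G₁ w,
          fun u w => by dsimp only; ring⟩ (e : Sym2 V₁)) ^ 3) +
      (∑ b : V₂, (gdeg G₂ b + n₁) ^ 3) := by
    rw [Findex_eq_s6 (vertexTJoin G₁ G₂) inferInstance, Fintype.sum_sum_type,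
      Fintype.sum_sum_type]
    congr 1
    · congr 1
      · exact Finset.sum_congr rfl fun v _ => by
          rw [gdeg_vertexTJoin_inl_inl, ← hn₂]
      · exact Finset.sum_congr rfl fun e _ => by
          rw [gdeg_vertexTJoin_inl_inr]
    · exact Finset.sum_congr rfl fun b _ => by
        rw [gdeg_vertexTJoin_inr, ← hn₁]
  have hA : (∑ v : V₁, (2 * gdeg G₁ v + n₂) ^ 3) =
      8 * Findex G₁ + 12 * n₂ * M1 G₁ + 12 * m₁ * n₂ ^ 2 + n₁ * n₂ ^ 3 := by
    have hpt : ∀ v : V₁, (2 * gdeg G₁ v + n₂) ^ 3 =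
        8 * gdeg G₁ v ^ 3 + 12 * n₂ * gdeg G₁ v ^ 2 + 6 * n₂ ^ 2 * gdeg G₁ v + n₂ ^ 3 :=
      fun v => by ring
    simp_rw [hpt]
    rw [Finset.sum_add_distrib, Finset.sum_add_distrib, Finset.sum_add_distrib,
      ← Finset.mul_sum, ← Finset.mul_sum, ← Finset.mul_sum,
      Finset.sum_const, smul_eq_mul, Finset.card_univ,
      ← Findex_eq_s6 G₁ J1, ← M1_eq_s6 G₁ J1, sum_gdeg_eq G₁ J1, ← hm₁]
    have : (Fintype.card V₁ : ℕ) = n₁ := by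
      rw [hn₁]; exact Nat.card_eq_fintype_card.symm
    rw [this]
    ring
  have hC : (∑ b : V₂, (gdeg G₂ b + n₁) ^ 3) =
      Findex G₂ + 3 * n₁ * M1 G₂ + 6 * m₂ * n₁ ^ 2 + n₂ * n₁ ^ 3 := by
    have hpt : ∀ b : V₂, (gdeg G₂ b + n₁) ^ 3 =
        gdeg G₂ b ^ 3 + 3 * n₁ * gdeg G₂ b ^ 2 + 3 * n₁ ^ 2 * gdeg G₂ b + n₁ ^ 3 :=
      fun b => by ring
    simp_rw [hpt]
    rw [Finset.sum_add_distrib, Finset.sum_add_distrib, Finset.sum_add_distrib,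
      ← Finset.mul_sum, ← Finset.mul_sum,
      Finset.sum_const, smul_eq_mul, Finset.card_univ,
      ← Findex_eq_s6 G₂ J2, ← M1_eq_s6 G₂ J2, sum_gdeg_eq G₂ J2, ← hm₂]
    have : (Fintype.card V₂ : ℕ) = n₂ := by
      rw [hn₂]; exact Nat.card_eq_fintype_card.symm
    rw [this]
    ring
  have hB : (∑ e : G₁.edgeSet, (Sym2.lift ⟨fun u w => gdeg G₁ u + gdeg G₁ w,
        fun u w => by dsimp only; ring⟩ (e : Sym2 V₁)) ^ 3) =
      M4 G₁ + 3 * ReZM G₁ := by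
    have hpt : ∀ e : G₁.edgeSet, (Sym2.lift ⟨fun u w => gdeg G₁ u + gdeg G₁ w,
        fun u w => by dsimp only; ring⟩ (e : Sym2 V₁)) ^ 3 =
        Sym2.lift ⟨fun u w => gdeg G₁ u ^ 3 + gdeg G₁ w ^ 3,
          fun u w => by dsimp only; ring⟩ (e : Sym2 V₁) +
        3 * Sym2.lift ⟨fun u w => gdeg G₁ u * gdeg G₁ w * (gdeg G₁ u + gdeg G₁ w),
          fun u w => by dsimp only; ring⟩ (e : Sym2 V₁) := by
      rintro ⟨s, hs⟩
      revert hs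
      induction s using Sym2.ind with
      | _ u w =>
      intro hs
      show (gdeg G₁ u + gdeg G₁ w) ^ 3 =
        (gdeg G₁ u ^ 3 + gdeg G₁ w ^ 3) +
          3 * (gdeg G₁ u * gdeg G₁ w * (gdeg G₁ u + gdeg G₁ w))
      ring
    simp_rw [hpt]
    rw [Finset.sum_add_distrib, ← Finset.mul_sum]
    have h1 : (∑ e : G₁.edgeSet, Sym2.lift ⟨fun u w => gdeg G₁ u ^ 3 + gdeg G₁ w ^ 3,
        fun u w => by dsimp only; ring⟩ (e : Sym2 V₁)) = M4 G₁ := by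
      refine (sum_edge_lift G₁ (fun v => gdeg G₁ v ^ 3)).trans ?_
      rw [M4_eq G₁ J1]
      exact Finset.sum_congr rfl fun v _ => by ring
    have h2 : (∑ e : G₁.edgeSet, Sym2.lift
        ⟨fun u w => gdeg G₁ u * gdeg G₁ w * (gdeg G₁ u + gdeg G₁ w),
          fun u w => by dsimp only; ring⟩ (e : Sym2 V₁)) = ReZM G₁ :=
      (ReZM_eq G₁ JE).symm
    rw [h1, h2]
  rw [key, hA, hB, hC]
  push_cast
  ring
end

section
/- For integers n, m ≥ 2, the F-index of the vertex S-join of the path P_n and the path P_m is F(P_n ∨̇_S P_m) = (mn − 6)(m² + n²) + 6mn(m + n) + 24mn − 10m − 2n − 36. -/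
noncomputable def ndeg {V : Type*} (G : SimpleGraph V) (v : V) : ℕ := Nat.card (G.neighborSet v)

lemma gdeg_eq_ndeg {V : Type*} [Finite V] (G : SimpleGraph V) (v : V) : gdeg G v = ndeg G v := by
  haveI : Fintype ↥(G.neighborSet v) := Fintype.ofFinite _
  have h : gdeg G v = G.degree v := by
    unfold gdeg
    congr 1
    exact Subsingleton.elim _ _
  rw [h, ndeg, Nat.card_eq_fintype_card, SimpleGraph.card_neighborSet_eq_degree]

lemma ndeg_incident {V : Type*} (G : SimpleGraph V) (a : V) :
    Nat.card {e : G.edgeSet | a ∈ (e : Sym2 V)} = ndeg G a := by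
  classical
  have h1 : {e : G.edgeSet | a ∈ (e : Sym2 V)} ≃ G.incidenceSet a :=
    { toFun := fun e => ⟨e.1.1, e.1.2, e.2⟩
      invFun := fun e => ⟨⟨e.1, e.2.1⟩, e.2.2⟩
      left_inv := fun e => rfl
      right_inv := fun e => rfl }
  rw [ndeg, Nat.card_congr (h1.trans (G.incidenceSetEquivNeighborSet a))]

lemma card_mem_sym2 {V : Type*} (G : SimpleGraph V) (e : ↥G.edgeSet) :
    Nat.card {v : V | v ∈ (e : Sym2 V)} = 2 := by
  obtain ⟨s, hs⟩ := e
  induction s using Sym2.ind with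
  | _ u w =>
    rw [SimpleGraph.mem_edgeSet] at hs
    have h : {v : V | v ∈ (s(u, w) : Sym2 V)} = {u, w} := by
      ext v; simp [Sym2.mem_iff]
    simp only [h]
    rw [Nat.card_coe_set_eq, Set.ncard_pair hs.ne]
lemma Findex_def {V : Type*} [Fintype V] (G : SimpleGraph V) :
    Findex G = ∑ v : V, ndeg G v ^ 3 := by
  unfold Findex
  rw [Subsingleton.elim (Fintype.ofFinite V) ‹Fintype V›]
  exact Finset.sum_congr rfl fun v _ => by rw [gdeg_eq_ndeg]

section VSJ
variable {V₁ V₂ : Type*} [Finite V₁] [Finite V₂] (G₁ : SimpleGraph V₁) (G₂ : SimpleGraph V₂)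

lemma vsj_ndeg_vert (a : V₁) :
    ndeg (vertexSJoin G₁ G₂) (Sum.inl (Sum.inl a)) = ndeg G₁ a + Nat.card V₂ := by
  have hset : (vertexSJoin G₁ G₂).neighborSet (Sum.inl (Sum.inl a)) =
      (fun e => (Sum.inl (Sum.inr e) : (V₁ ⊕ ↥G₁.edgeSet) ⊕ V₂)) ''
        {e : G₁.edgeSet | a ∈ (e : Sym2 V₁)} ∪ Set.range Sum.inr := by
    ext x
    rcases x with (v | e) | b <;>
      simp [vertexSJoin, joinOn, Sgraph, SimpleGraph.neighborSet]
  rw [ndeg, hset, Nat.card_coe_set_eq, Set.ncard_union_eq, Set.ncard_image_of_injective _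
    (fun x y h => by simpa using h), ← Nat.card_coe_set_eq, ndeg_incident,
    ← Set.image_univ, Set.ncard_image_of_injective _ Sum.inr_injective, Set.ncard_univ]
  · rw [Set.disjoint_left]
    rintro x ⟨e, -, rfl⟩ ⟨b, hb⟩
    exact (Sum.inl_ne_inr hb.symm)

lemma vsj_ndeg_sub (e : ↥G₁.edgeSet) :
    ndeg (vertexSJoin G₁ G₂) (Sum.inl (Sum.inr e)) = 2 := by
  have hset : (vertexSJoin G₁ G₂).neighborSet (Sum.inl (Sum.inr e)) =
      (fun v => (Sum.inl (Sum.inl v) : (V₁ ⊕ ↥G₁.edgeSet) ⊕ V₂)) ''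
        {v : V₁ | v ∈ (e : Sym2 V₁)} := by
    ext x
    rcases x with (v | f) | b <;>
      simp [vertexSJoin, joinOn, Sgraph, SimpleGraph.neighborSet]
  rw [ndeg, hset, Nat.card_coe_set_eq, Set.ncard_image_of_injective _
    (fun x y h => by simpa using h), ← Nat.card_coe_set_eq, card_mem_sym2]

lemma vsj_ndeg_right (b : V₂) :
    ndeg (vertexSJoin G₁ G₂) (Sum.inr b) = Nat.card V₁ + ndeg G₂ b := by
  have hset : (vertexSJoin G₁ G₂).neighborSet (Sum.inr b) =
      (fun v => (Sum.inl (Sum.inl v) : (V₁ ⊕ ↥G₁.edgeSet) ⊕ V₂)) '' Set.univ ∪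
        Sum.inr '' G₂.neighborSet b := by
    ext x
    rcases x with (v | f) | b' <;>
      simp [vertexSJoin, joinOn, Sgraph, SimpleGraph.neighborSet]
  rw [ndeg, hset, Nat.card_coe_set_eq, Set.ncard_union_eq, Set.ncard_image_of_injective _
    (fun x y h => by simpa using h), Set.ncard_univ, Set.ncard_image_of_injective _
    Sum.inr_injective, ← Nat.card_coe_set_eq]
  · rfl
  · rw [Set.disjoint_left]
    rintro x ⟨v, -, rfl⟩ ⟨w, -, hb⟩
    exact (Sum.inl_ne_inr hb.symm)

end VSJ
lemma ndeg_pathGraph (n : ℕ) (a : Fin n) :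
    ndeg (SimpleGraph.pathGraph n) a =
      (if a.1 + 1 < n then 1 else 0) + (if 0 < a.1 then 1 else 0) := by
  have hset : (SimpleGraph.pathGraph n).neighborSet a =
      {w : Fin n | a.1 + 1 = w.1 ∨ w.1 + 1 = a.1} := by
    ext w; exact SimpleGraph.pathGraph_adj
  rw [ndeg, hset]
  rcases Nat.lt_or_ge (a.1 + 1) n with h1 | h1 <;> rcases Nat.eq_zero_or_pos a.1 with h0 | h0
  · have : {w : Fin n | a.1 + 1 = w.1 ∨ w.1 + 1 = a.1} = {⟨a.1 + 1, h1⟩} := by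
      ext w; simp [Fin.ext_iff]; omega
    rw [this, Nat.card_coe_set_eq, Set.ncard_singleton]
    split_ifs <;> omega
  · have ha : a.1 - 1 < n := by omega
    have : {w : Fin n | a.1 + 1 = w.1 ∨ w.1 + 1 = a.1} = {⟨a.1 + 1, h1⟩, ⟨a.1 - 1, ha⟩} := by
      ext w; simp [Fin.ext_iff]; omega
    rw [this, Nat.card_coe_set_eq, Set.ncard_pair (by simp [Fin.ext_iff]; omega)]
    split_ifs <;> omega
  · have : {w : Fin n | a.1 + 1 = w.1 ∨ w.1 + 1 = a.1} = ∅ := by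
      ext w; simp [Fin.ext_iff]; omega
    rw [this, Nat.card_coe_set_eq, Set.ncard_empty]
    split_ifs <;> omega
  · have ha : a.1 - 1 < n := by omega
    have : {w : Fin n | a.1 + 1 = w.1 ∨ w.1 + 1 = a.1} = {⟨a.1 - 1, ha⟩} := by
      ext w; simp [Fin.ext_iff]; omega
    rw [this, Nat.card_coe_set_eq, Set.ncard_singleton]
    split_ifs <;> omega

lemma path_sum (f : ℕ → ℕ) (k : ℕ) :
    ∑ a : Fin (k + 2), f (ndeg (SimpleGraph.pathGraph (k + 2)) a) = 2 * f 1 + k * f 2 := by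
  have h : ∑ a : Fin (k + 2), f (ndeg (SimpleGraph.pathGraph (k + 2)) a) =
      ∑ i ∈ Finset.range (k + 2),
        (fun i => f ((if i + 1 < k + 2 then 1 else 0) + (if 0 < i then 1 else 0))) i := by
    rw [← Fin.sum_univ_eq_sum_range]
    exact Finset.sum_congr rfl fun a _ => by rw [ndeg_pathGraph]
  rw [h, Finset.sum_range_succ, Finset.sum_range_succ']
  have h2 : ∀ i ∈ Finset.range k, (fun i => f ((if i + 1 < k + 2 then 1 else 0) +
      (if 0 < i then 1 else 0))) (i + 1) = f 2 := by
    intro i hi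
    rw [Finset.mem_range] at hi
    simp only []
    rw [if_pos (by omega), if_pos (by omega)]
  rw [Finset.sum_congr rfl h2, Finset.sum_const, Finset.card_range]
  simp only [Nat.lt_irrefl, if_false, if_pos (Nat.succ_pos k), if_pos (by omega : 0 + 1 < k + 2),
    Nat.lt_irrefl]
  norm_num
  ring

lemma card_path_edges (k : ℕ) : Nat.card ↥(SimpleGraph.pathGraph (k + 2)).edgeSet = k + 1 := by
  classical
  have hh := SimpleGraph.sum_degrees_eq_twice_card_edges (SimpleGraph.pathGraph (k + 2))
  have hd : ∀ v : Fin (k + 2), (SimpleGraph.pathGraph (k + 2)).degree v =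
      ndeg (SimpleGraph.pathGraph (k + 2)) v := by
    intro v
    rw [ndeg, Nat.card_eq_fintype_card, SimpleGraph.card_neighborSet_eq_degree]
  rw [Finset.sum_congr rfl (fun v _ => hd v), path_sum (fun d => d) k] at hh
  unfold SimpleGraph.edgeFinset at hh
  rw [Nat.card_eq_fintype_card, ← Set.toFinset_card]
  omega
theorem Findex_vertexSJoin_ex8 (n m : ℕ) (hn : 2 ≤ n) (hm : 2 ≤ m) :
    (Findex (vertexSJoin (SimpleGraph.pathGraph n) (SimpleGraph.pathGraph m)) : ℤ) =
      ((m : ℤ) * (n : ℤ) - 6) * ((m : ℤ) ^ 2 + (n : ℤ) ^ 2) + 6 * (m : ℤ) * (n : ℤ) * ((m : ℤ) + (n : ℤ)) + 24 * (m : ℤ) * (n : ℤ) - 10 * (m : ℤ) - 2 * (n : ℤ) - 36 := by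
  obtain ⟨a, rfl⟩ : ∃ a, n = a + 2 := ⟨n - 2, by omega⟩
  obtain ⟨b, rfl⟩ : ∃ b, m = b + 2 := ⟨m - 2, by omega⟩
  haveI : Fintype ↥(SimpleGraph.pathGraph (a + 2)).edgeSet := Fintype.ofFinite _
  have key : Findex (vertexSJoin (SimpleGraph.pathGraph (a + 2)) (SimpleGraph.pathGraph (b + 2)))
      = 2 * (1 + (b + 2)) ^ 3 + a * (2 + (b + 2)) ^ 3 + (a + 1) * 8
        + (2 * ((a + 2) + 1) ^ 3 + b * ((a + 2) + 2) ^ 3) := by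
    rw [Findex_def, Fintype.sum_sum_type, Fintype.sum_sum_type]
    have hv : ∑ x : Fin (a + 2),
        ndeg (vertexSJoin (SimpleGraph.pathGraph (a + 2)) (SimpleGraph.pathGraph (b + 2)))
          (Sum.inl (Sum.inl x)) ^ 3
        = ∑ x : Fin (a + 2), (ndeg (SimpleGraph.pathGraph (a + 2)) x + (b + 2)) ^ 3 :=
      Finset.sum_congr rfl fun x _ => by
        rw [vsj_ndeg_vert, Nat.card_eq_fintype_card, Fintype.card_fin]
    have he : ∑ e : ↥(SimpleGraph.pathGraph (a + 2)).edgeSet,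
        ndeg (vertexSJoin (SimpleGraph.pathGraph (a + 2)) (SimpleGraph.pathGraph (b + 2)))
          (Sum.inl (Sum.inr e)) ^ 3
        = ∑ _e : ↥(SimpleGraph.pathGraph (a + 2)).edgeSet, 8 :=
      Finset.sum_congr rfl fun e _ => by rw [vsj_ndeg_sub]; norm_num
    have hw : ∑ y : Fin (b + 2),
        ndeg (vertexSJoin (SimpleGraph.pathGraph (a + 2)) (SimpleGraph.pathGraph (b + 2)))
          (Sum.inr y) ^ 3
        = ∑ y : Fin (b + 2), ((a + 2) + ndeg (SimpleGraph.pathGraph (b + 2)) y) ^ 3 :=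
      Finset.sum_congr rfl fun y _ => by
        rw [vsj_ndeg_right, Nat.card_eq_fintype_card, Fintype.card_fin]
    rw [hv, he, hw]
    have p1 : ∑ x : Fin (a + 2), (ndeg (SimpleGraph.pathGraph (a + 2)) x + (b + 2)) ^ 3
        = 2 * (1 + (b + 2)) ^ 3 + a * (2 + (b + 2)) ^ 3 :=
      path_sum (fun d => (d + (b + 2)) ^ 3) a
    have p2 : ∑ y : Fin (b + 2), ((a + 2) + ndeg (SimpleGraph.pathGraph (b + 2)) y) ^ 3
        = 2 * ((a + 2) + 1) ^ 3 + b * ((a + 2) + 2) ^ 3 :=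
      path_sum (fun d => ((a + 2) + d) ^ 3) b
    rw [p1, p2, Finset.sum_const, Finset.card_univ, ← Nat.card_eq_fintype_card,
      card_path_edges, smul_eq_mul]
  rw [key]
  push_cast
  ring
end
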